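/- Let Q be a compact Hausdorff space, μ a regular Borel probability measure with full support, Λ a commutative (multiplicative) semigroup, and B ⊆ C(Q) a subalgebra graded by Λ: B = Σ_{t∈Λ} B_t (algebraic sum), B_t · B_r ⊆ B_{tr}, and B_t ⊥ B_r in L²(Q,μ) for t ≠ r. Let χ : Λ → closed unit disc be a semigroup homomorphism and define E : B → B linearly by Ef = χ(t)f for f ∈ B_t. Then E is an endomorphism of B and ‖Ef‖_∞ ≤ ‖f‖_∞ for all f ∈ B. -/

import Mathlib

open MeasureTheory

/-- If a subalgebra of `C(Q)` is graded (with `L²(Q,μ)`-orthogonal components) by a commutative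
semigroup `Λ`, and `χ : Λ → closed unit disc` is a semigroup homomorphism, then the linear map
multiplying the `t`-component by `χ t` is an algebra endomorphism of the graded subalgebra and a
sup-norm contraction on it. -/
theorem stmt_1 {Q : Type*} [TopologicalSpace Q] [CompactSpace Q] [T2Space Q]
    [MeasurableSpace Q] [BorelSpace Q]
    (μ : Measure Q) [IsProbabilityMeasure μ] [μ.Regular] [μ.IsOpenPosMeasure]
    {Λ : Type*} [CommSemigroup Λ]
    (Bc : Λ → Submodule ℂ C(Q, ℂ))
    (hmul : ∀ t r : Λ, ∀ f ∈ Bc t, ∀ g ∈ Bc r, f * g ∈ Bc (t * r))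
    (horth : ∀ t r : Λ, t ≠ r → ∀ f ∈ Bc t, ∀ g ∈ Bc r,
      ∫ x, (f x) * (starRingEnd ℂ) (g x) ∂μ = 0)
    (χ : Λ → ℂ) (hχ1 : ∀ t, ‖χ t‖ ≤ 1) (hχm : ∀ t r, χ (t * r) = χ t * χ r)
    (E : C(Q, ℂ) →ₗ[ℂ] C(Q, ℂ))
    (hEdef : ∀ t : Λ, ∀ f ∈ Bc t, E f = χ t • f) :
    (∀ f ∈ (⨆ t, Bc t : Submodule ℂ C(Q, ℂ)), ∀ g ∈ (⨆ t, Bc t : Submodule ℂ C(Q, ℂ)),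
        E (f * g) = E f * E g) ∧
    ∀ f ∈ (⨆ t, Bc t : Submodule ℂ C(Q, ℂ)), ‖E f‖ ≤ ‖f‖ := by
  set B : Submodule ℂ C(Q, ℂ) := ⨆ t, Bc t with hB
  have hmem : ∀ t, Bc t ≤ B := fun t => le_iSup Bc t
  have cint : ∀ f : Q → ℂ, Continuous f → Integrable f μ := fun f hf =>
    hf.integrable_of_hasCompactSupport
      (IsCompact.of_isClosed_subset isCompact_univ (isClosed_tsupport _) (Set.subset_univ _))
  have rint : ∀ f : Q → ℝ, Continuous f → Integrable f μ := fun f hf =>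
    hf.integrable_of_hasCompactSupport
      (IsCompact.of_isClosed_subset isCompact_univ (isClosed_tsupport _) (Set.subset_univ _))
  have hint : ∀ g h : C(Q, ℂ), Integrable (fun x => g x * (starRingEnd ℂ) (h x)) μ :=
    fun g h => cint _ (g.continuous.mul (Complex.continuous_conj.comp h.continuous))
  -- Part 1: multiplicativity
  have part1 : ∀ f ∈ B, ∀ g ∈ B, E (f * g) = E f * E g := by
    intro f hf
    refine Submodule.iSup_induction (motive := fun f => ∀ g ∈ B, E (f * g) = E f * E g)
      Bc hf (fun t f hft => ?_) ?_ ?_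
    · show ∀ g ∈ B, E (f * g) = E f * E g
      intro g hg
      refine Submodule.iSup_induction (motive := fun g => E (f * g) = E f * E g)
        Bc hg (fun r g hgr => ?_) ?_ ?_
      · show E (f * g) = E f * E g
        rw [hEdef _ _ (hmul t r f hft g hgr), hEdef t f hft, hEdef r g hgr, hχm,
          smul_mul_smul_comm]
      · show E (f * 0) = E f * E 0
        simp
      · intro x y hx hy
        show E (f * (x + y)) = E f * E (x + y)
        rw [mul_add, map_add, hx, hy, map_add, mul_add]
    · show ∀ g ∈ B, E (0 * g) = E 0 * E g
      intro g hg; simp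
    · intro x y hx hy g hg
      show E ((x + y) * g) = E (x + y) * E g
      rw [add_mul, map_add, hx g hg, hy g hg, map_add, add_mul]
  -- B is closed under multiplication
  have hBmul : ∀ f ∈ B, ∀ g ∈ B, f * g ∈ B := by
    intro f hf
    refine Submodule.iSup_induction (motive := fun f => ∀ g ∈ B, f * g ∈ B)
      Bc hf (fun t f hft => ?_) ?_ ?_
    · show ∀ g ∈ B, f * g ∈ B
      intro g hg
      refine Submodule.iSup_induction (motive := fun g => f * g ∈ B)
        Bc hg (fun r g hgr => hmem _ (hmul t r f hft g hgr)) ?_ ?_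
      · show f * 0 ∈ B
        rw [mul_zero]; exact B.zero_mem
      · intro x y hx hy
        show f * (x + y) ∈ B
        rw [mul_add]; exact B.add_mem hx hy
    · show ∀ g ∈ B, 0 * g ∈ B
      intro g hg; rw [zero_mul]; exact B.zero_mem
    · intro x y hx hy g hg
      show (x + y) * g ∈ B
      rw [add_mul]; exact B.add_mem (hx g hg) (hy g hg)
  -- key L² computation
  have key : ∀ (S : Finset Λ) (d : Λ → C(Q, ℂ)), (∀ t ∈ S, d t ∈ Bc t) → ∀ a : Λ → ℂ,
      ∫ x, ‖(∑ t ∈ S, a t • d t) x‖ ^ 2 ∂μ = ∑ t ∈ S, ‖a t‖ ^ 2 * ∫ x, ‖d t x‖ ^ 2 ∂μ := by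
    intro S d hd a
    have hself : ∀ u : C(Q, ℂ),
        ∫ x, u x * (starRingEnd ℂ) (u x) ∂μ = ((∫ x, ‖u x‖ ^ 2 ∂μ : ℝ) : ℂ) := by
      intro u
      have hpt : ∀ x, u x * (starRingEnd ℂ) (u x) = ((‖u x‖ ^ 2 : ℝ) : ℂ) := fun x => by
        rw [Complex.mul_conj']; push_cast; ring
      calc ∫ x, u x * (starRingEnd ℂ) (u x) ∂μ = ∫ x, ((‖u x‖ ^ 2 : ℝ) : ℂ) ∂μ :=
            integral_congr_ae (Filter.Eventually.of_forall hpt)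
        _ = _ := integral_ofReal
    have hcoe : ∀ x : Q, (∑ t ∈ S, a t • d t) x = ∑ t ∈ S, a t * d t x := by
      intro x; simp
    -- complex identity
    have hC : ∫ x, (∑ t ∈ S, a t • d t) x * (starRingEnd ℂ) ((∑ t ∈ S, a t • d t) x) ∂μ
        = ∑ t ∈ S, (a t * (starRingEnd ℂ) (a t)) *
            ∫ x, d t x * (starRingEnd ℂ) (d t x) ∂μ := by
      have expand : ∀ x : Q,
          (∑ t ∈ S, a t • d t) x * (starRingEnd ℂ) ((∑ t ∈ S, a t • d t) x)
          = ∑ t ∈ S, ∑ r ∈ S,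
              (a t * (starRingEnd ℂ) (a r)) * (d t x * (starRingEnd ℂ) (d r x)) := by
        intro x
        rw [hcoe, map_sum, Finset.sum_mul_sum]
        refine Finset.sum_congr rfl fun t _ => Finset.sum_congr rfl fun r _ => ?_
        rw [map_mul]; ring
      calc ∫ x, (∑ t ∈ S, a t • d t) x * (starRingEnd ℂ) ((∑ t ∈ S, a t • d t) x) ∂μ
          = ∫ x, ∑ t ∈ S, ∑ r ∈ S,
              (a t * (starRingEnd ℂ) (a r)) * (d t x * (starRingEnd ℂ) (d r x)) ∂μ := by
            congr 1; ext x; exact expand x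
        _ = ∑ t ∈ S, ∑ r ∈ S,
              ∫ x, (a t * (starRingEnd ℂ) (a r)) * (d t x * (starRingEnd ℂ) (d r x)) ∂μ := by
            have hI : ∀ t r : Λ, Integrable
                (fun x => (a t * (starRingEnd ℂ) (a r)) * (d t x * (starRingEnd ℂ) (d r x))) μ :=
              fun t r => (hint (d t) (d r)).const_mul _
            rw [integral_finset_sum S (fun t _ => integrable_finset_sum S (fun r _ => hI t r))]
            exact Finset.sum_congr rfl fun t _ => integral_finset_sum S (fun r _ => hI t r)
        _ = ∑ t ∈ S, (a t * (starRingEnd ℂ) (a t)) *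
              ∫ x, d t x * (starRingEnd ℂ) (d t x) ∂μ := by
            refine Finset.sum_congr rfl fun t ht => ?_
            rw [Finset.sum_eq_single_of_mem t ht]
            · rw [integral_const_mul]
            · intro r hr hne
              rw [integral_const_mul, horth t r (Ne.symm hne) (d t) (hd t ht) (d r) (hd r hr),
                mul_zero]
      
    rw [hself] at hC
    have : ((∫ x, ‖(∑ t ∈ S, a t • d t) x‖ ^ 2 ∂μ : ℝ) : ℂ)
        = ((∑ t ∈ S, ‖a t‖ ^ 2 * ∫ x, ‖d t x‖ ^ 2 ∂μ : ℝ) : ℂ) := by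
      rw [hC]
      push_cast
      refine Finset.sum_congr rfl fun t _ => ?_
      rw [hself, Complex.mul_conj']
      try push_cast
      try ring
    exact_mod_cast this
  -- L² contraction
  have l2bound : ∀ f ∈ B, ∫ x, ‖(E f) x‖ ^ 2 ∂μ ≤ ∫ x, ‖f x‖ ^ 2 ∂μ := by
    intro f hf
    obtain ⟨c, hc, hsum⟩ := (Submodule.mem_iSup_iff_exists_finsupp Bc f).mp hf
    have hf1 : f = ∑ t ∈ c.support, (1 : ℂ) • c t := by
      rw [← hsum]; simp [Finsupp.sum]
    have hEf : E f = ∑ t ∈ c.support, χ t • c t := by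
      rw [hf1, map_sum]
      refine Finset.sum_congr rfl fun t ht => ?_
      rw [one_smul, hEdef t (c t) (hc t)]
    have h1 : ∫ x, ‖f x‖ ^ 2 ∂μ = ∑ t ∈ c.support, ‖(1:ℂ)‖ ^ 2 * ∫ x, ‖c t x‖ ^ 2 ∂μ := by
      conv_lhs => rw [hf1]
      exact key c.support c (fun t _ => hc t) _
    have h2 : ∫ x, ‖(E f) x‖ ^ 2 ∂μ = ∑ t ∈ c.support, ‖χ t‖ ^ 2 * ∫ x, ‖c t x‖ ^ 2 ∂μ := by
      conv_lhs => rw [hEf]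
      exact key c.support c (fun t _ => hc t) _
    rw [h1, h2]
    refine Finset.sum_le_sum fun t _ => ?_
    have hnn : 0 ≤ ∫ x, ‖c t x‖ ^ 2 ∂μ := integral_nonneg fun x => by positivity
    have : ‖χ t‖ ^ 2 ≤ 1 := pow_le_one₀ (norm_nonneg _) (hχ1 t)
    calc ‖χ t‖ ^ 2 * ∫ x, ‖c t x‖ ^ 2 ∂μ ≤ 1 * ∫ x, ‖c t x‖ ^ 2 ∂μ := by
          exact mul_le_mul_of_nonneg_right this hnn
      _ = ‖(1:ℂ)‖ ^ 2 * ∫ x, ‖c t x‖ ^ 2 ∂μ := by simp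
  refine ⟨part1, ?_⟩
  -- Part 2: sup-norm contraction
  intro f hf
  by_contra hcon
  push_neg at hcon
  set g : C(Q, ℂ) := E f with hg
  set b := ‖f‖ with hbdef
  set a := ‖g‖ with hadef
  have hb0 : (0:ℝ) ≤ b := norm_nonneg f
  set r := (a + b) / 2 with hrdef
  have hrb : b < r := by rw [hrdef]; linarith
  have hra : r < a := by rw [hrdef]; linarith
  have hr0 : (0:ℝ) < r := lt_of_le_of_lt hb0 hrb
  have hx : ∃ x, r < ‖g x‖ := by
    by_contra h
    push_neg at h
    exact absurd ((ContinuousMap.norm_le g hr0.le).mpr h) (not_le.mpr hra)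
  obtain ⟨x₀, hx₀⟩ := hx
  set U := {x | r < ‖g x‖} with hUdef
  have hUopen : IsOpen U := isOpen_lt continuous_const g.continuous.norm
  have hU0 : 0 < μ U := hUopen.measure_pos μ ⟨x₀, hx₀⟩
  set m := (μ U).toReal with hmdef
  have hm0 : 0 < m := ENNReal.toReal_pos hU0.ne' (measure_ne_top μ U)
  have hpow : ∀ n : ℕ, f ^ (n + 1) ∈ B := by
    intro n
    induction n with
    | zero => simpa using hf
    | succ k ih => rw [pow_succ]; exact hBmul _ ih _ hf
  have hEpow : ∀ n : ℕ, E (f ^ (n + 1)) = g ^ (n + 1) := by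
    intro n
    induction n with
    | zero => simp [hg]
    | succ k ih => rw [pow_succ, part1 _ (hpow k) _ hf, ih, ← pow_succ]
  have hn : ∀ n : ℕ, m * (r ^ (n + 1)) ^ 2 ≤ (b ^ (n + 1)) ^ 2 := by
    intro n
    set k := n + 1
    have hintg : Integrable (fun x => ‖(g ^ k) x‖ ^ 2) μ :=
      rint _ (((g ^ k).continuous.norm).pow 2)
    have hintf : Integrable (fun x => ‖(f ^ k) x‖ ^ 2) μ :=
      rint _ (((f ^ k).continuous.norm).pow 2)
    have h3 : m * (r ^ k) ^ 2 ≤ ∫ x, ‖(g ^ k) x‖ ^ 2 ∂μ := by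
      have hle : ∫ x in U, ‖(g ^ k) x‖ ^ 2 ∂μ ≤ ∫ x, ‖(g ^ k) x‖ ^ 2 ∂μ :=
        setIntegral_le_integral hintg (Filter.Eventually.of_forall fun x => by positivity)
      have hge : (r ^ k) ^ 2 * m ≤ ∫ x in U, ‖(g ^ k) x‖ ^ 2 ∂μ := by
        refine le_trans (le_of_eq ?_) (setIntegral_ge_of_const_le (c := (r ^ k) ^ 2)
          hUopen.measurableSet (measure_ne_top μ U) (fun x hx => ?_) hintg.integrableOn)
        · rw [smul_eq_mul, mul_comm]; rfl
        have : r ≤ ‖g x‖ := le_of_lt hx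
        have hgx : ‖(g ^ k) x‖ = ‖g x‖ ^ k := by
          simp [norm_pow]
        rw [hgx]
        exact pow_le_pow_left₀ (by positivity) (pow_le_pow_left₀ hr0.le this k) 2
      calc m * (r ^ k) ^ 2 = (r ^ k) ^ 2 * m := by ring
        _ ≤ ∫ x in U, ‖(g ^ k) x‖ ^ 2 ∂μ := hge
        _ ≤ ∫ x, ‖(g ^ k) x‖ ^ 2 ∂μ := hle
    have h1 : ∫ x, ‖(g ^ k) x‖ ^ 2 ∂μ ≤ ∫ x, ‖(f ^ k) x‖ ^ 2 ∂μ := by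
      rw [← hEpow n]; exact l2bound _ (hpow n)
    have h2 : ∫ x, ‖(f ^ k) x‖ ^ 2 ∂μ ≤ (b ^ k) ^ 2 := by
      have : ∫ x, ‖(f ^ k) x‖ ^ 2 ∂μ ≤ ∫ _x, (b ^ k) ^ 2 ∂μ := by
        refine integral_mono hintf (integrable_const _) fun x => ?_
        have hfx : ‖(f ^ k) x‖ = ‖f x‖ ^ k := by simp [norm_pow]
        rw [hfx]
        exact pow_le_pow_left₀ (by positivity)
          (pow_le_pow_left₀ (norm_nonneg _) (f.norm_coe_le_norm x) k) 2
      simpa using this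
    linarith
  -- derive contradiction
  set q := (b / r) ^ 2 with hqdef
  have hq0 : 0 ≤ q := by positivity
  have hq1 : q < 1 := by
    rw [hqdef]
    have h1 : b / r < 1 := (div_lt_one hr0).mpr hrb
    calc (b / r) ^ 2 ≤ (b / r) ^ 1 := pow_le_pow_of_le_one (by positivity) h1.le (by norm_num)
      _ < 1 := by simpa using h1
  obtain ⟨n, hnq⟩ := exists_pow_lt_of_lt_one hm0 hq1
  have hmq : m ≤ q ^ (n + 1) := by
    have h := hn n
    have hr2 : (0:ℝ) < (r ^ (n+1)) ^ 2 := by positivity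
    have hqe : q ^ (n + 1) = (b ^ (n+1)) ^ 2 / (r ^ (n+1)) ^ 2 := by
      rw [hqdef, ← pow_mul, mul_comm 2 (n+1), pow_mul, div_pow, div_pow]
    rw [hqe, le_div_iff₀ hr2]
    exact h
  have hstep : q ^ (n + 1) ≤ q ^ n := pow_le_pow_of_le_one hq0 hq1.le (by omega)
  linarith
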